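/- arXiv:1910.14514 — 2 statements merged into one kernel-verified Lean document; each statement's English description precedes it below -/
import Mathlib

section
/- Fix k ∈ ℂ and t ∈ ℝ. On the open interval y ∈ (|t|, ∞), the function y ↦ r(k,y,t) is differentiable, and its derivative equals D(k,y,t); that is, (d/dy) [(1/(2π)) ∫_{−π/2}^{π/2} cosh(k √(y²−t²) sin s) ds] = (k² y/(2π)) ∫_{−π/2}^{π/2} sin²(s) · g(k √(y²−t²) sin s) ds for all y > |t|. -/
open MeasureTheory

/-- The entire extension of `ζ ↦ sinh ζ / ζ`. -/
noncomputable def sinhc (z : ℂ) : ℂ := if z = 0 then 1 else Complex.sinh z / z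

/-- `r(k,y,t) = (1/(2π)) ∫_{−π/2}^{π/2} cosh(k √(y²−t²) sin s) ds`. -/
noncomputable def rker (k : ℂ) (y t : ℝ) : ℂ :=
  (1 / (2 * (Real.pi : ℂ))) *
    ∫ s in (-(Real.pi / 2))..(Real.pi / 2),
      Complex.cosh (k * (Real.sqrt (y ^ 2 - t ^ 2) : ℂ) * (Real.sin s : ℂ))

/-- `D(k,y,t) = (k² y/(2π)) ∫_{−π/2}^{π/2} sin² s · g(k √(y²−t²) sin s) ds`. -/
noncomputable def Dker (k : ℂ) (y t : ℝ) : ℂ :=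
  (k ^ 2 * (y : ℂ) / (2 * (Real.pi : ℂ))) *
    ∫ s in (-(Real.pi / 2))..(Real.pi / 2),
      ((Real.sin s : ℂ)) ^ 2 * sinhc (k * (Real.sqrt (y ^ 2 - t ^ 2) : ℂ) * (Real.sin s : ℂ))

lemma norm_sinh_le (w : ℂ) : ‖Complex.sinh w‖ ≤ Real.exp ‖w‖ := by
  rw [Complex.sinh]
  have h1 : ‖Complex.exp w‖ ≤ Real.exp ‖w‖ := by
    rw [Complex.norm_exp]
    exact Real.exp_le_exp.2 (le_trans (le_abs_self _) (Complex.abs_re_le_norm w))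
  have h2 : ‖Complex.exp (-w)‖ ≤ Real.exp ‖w‖ := by
    rw [Complex.norm_exp]
    refine Real.exp_le_exp.2 ?_
    have := Complex.abs_re_le_norm (-w)
    simp only [Complex.neg_re, abs_neg, map_neg_eq_map] at this
    exact le_trans (le_abs_self _) (by simpa using this)
  calc ‖(Complex.exp w - Complex.exp (-w)) / 2‖
      ≤ (‖Complex.exp w‖ + ‖Complex.exp (-w)‖) / 2 := by
        rw [norm_div]
        apply div_le_div_of_nonneg_right (norm_sub_le _ _) (by norm_num) |>.trans_eq
        norm_num
    _ ≤ Real.exp ‖w‖ := by linarith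

lemma hasDerivAt_sqrt_sub (t x : ℝ) (hx : |t| < x) :
    HasDerivAt (fun x : ℝ => Real.sqrt (x ^ 2 - t ^ 2))
      (x / Real.sqrt (x ^ 2 - t ^ 2)) x := by
  have hx0 : 0 < x := lt_of_le_of_lt (abs_nonneg t) hx
  have h1 : t < x := lt_of_le_of_lt (le_abs_self t) hx
  have h2 : -x < t := by linarith [neg_abs_le t]
  have hne : x ^ 2 - t ^ 2 ≠ 0 := by nlinarith
  have hinner : HasDerivAt (fun x : ℝ => x ^ 2 - t ^ 2) (2 * x) x := by
    simpa [mul_comm] using (hasDerivAt_pow 2 x).sub_const (t ^ 2)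
  have := (Real.hasDerivAt_sqrt hne).comp x hinner
  convert this using 1
  · rfl
  · rfl
  · rfl
  · rw [div_mul_eq_mul_div, one_mul, mul_div_mul_left _ _ (two_ne_zero' ℝ)]

/-- For fixed `k ∈ ℂ`, `t ∈ ℝ` and any `y > |t|`, the map
`y ↦ r(k,y,t)` is differentiable at `y` with derivative `D(k,y,t)`. -/
theorem hasDerivAt_rker (k : ℂ) (t : ℝ) :
    ∀ y : ℝ, |t| < y → HasDerivAt (fun y' : ℝ => rker k y' t) (Dker k y t) y := by
  intro y hy
  have hy0 : 0 < y := lt_of_le_of_lt (abs_nonneg t) hy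
  set ε : ℝ := (y - |t|) / 2 with hε
  have hεpos : 0 < ε := by rw [hε]; linarith
  set m : ℝ := (y + |t|) / 2 with hm
  have hmt : |t| < m := by rw [hm]; linarith
  have hm0 : 0 < m := lt_of_le_of_lt (abs_nonneg t) hmt
  set zmin : ℝ := Real.sqrt (m ^ 2 - t ^ 2) with hzmin
  have ht2m : t ^ 2 < m ^ 2 := by
    have h1 : -m < t := by linarith [neg_abs_le t]
    have h2 : t < m := by linarith [le_abs_self t]
    nlinarith
  have hzminpos : 0 < zmin := Real.sqrt_pos.mpr (by linarith)
  have hball : ∀ x ∈ Metric.ball y ε, |t| < x ∧ x < y + ε ∧ m ≤ x := by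
    intro x hx
    rw [Metric.mem_ball, Real.dist_eq, abs_lt] at hx
    have hxm : m ≤ x := by rw [hm]; rw [hε] at hx; linarith [hx.1]
    exact ⟨lt_of_lt_of_le hmt hxm, by linarith [hx.2], hxm⟩
  set Z : ℝ → ℝ := fun x => Real.sqrt (x ^ 2 - t ^ 2) with hZ
  have hZle : ∀ x ∈ Metric.ball y ε, zmin ≤ Z x ∧ Z x ≤ x := by
    intro x hx
    obtain ⟨h1, h2, h3⟩ := hball x hx
    have hx0 : 0 < x := lt_of_le_of_lt (abs_nonneg t) h1
    constructor
    · exact Real.sqrt_le_sqrt (by nlinarith)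
    · calc Z x ≤ Real.sqrt (x ^ 2) := Real.sqrt_le_sqrt (by nlinarith [sq_nonneg t])
        _ = x := by rw [Real.sqrt_sq hx0.le]
  set F : ℝ → ℝ → ℂ := fun x s => Complex.cosh (k * ((Z x : ℝ) : ℂ) * (Real.sin s : ℂ)) with hF
  set F' : ℝ → ℝ → ℂ := fun x s =>
    Complex.sinh (k * ((Z x : ℝ) : ℂ) * (Real.sin s : ℂ)) *
      (k * (Real.sin s : ℂ) * ((x / Z x : ℝ) : ℂ)) with hF'
  set bound : ℝ → ℝ := fun _ => Real.exp (‖k‖ * (y + ε)) * (‖k‖ * ((y + ε) / zmin)) with hbd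
  have key := intervalIntegral.hasDerivAt_integral_of_dominated_loc_of_deriv_le
    (F := F) (F' := F') (x₀ := y) (a := -(Real.pi / 2)) (b := Real.pi / 2)
    (bound := bound) (μ := volume) (Metric.ball_mem_nhds y hεpos)
    (Filter.Eventually.of_forall fun x => by
      apply Continuous.aestronglyMeasurable
      exact Complex.continuous_cosh.comp (continuous_const.mul
        (Complex.continuous_ofReal.comp Real.continuous_sin)))
    (by
      apply Continuous.intervalIntegrable
      exact Complex.continuous_cosh.comp (continuous_const.mul
        (Complex.continuous_ofReal.comp Real.continuous_sin)))
    (by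
      apply Continuous.aestronglyMeasurable
      apply Continuous.mul
      · exact Complex.continuous_sinh.comp (continuous_const.mul
          (Complex.continuous_ofReal.comp Real.continuous_sin))
      · exact (continuous_const.mul
          (Complex.continuous_ofReal.comp Real.continuous_sin)).mul continuous_const)
    (Filter.Eventually.of_forall fun s _ x hx => by
      obtain ⟨h1, h2, h3⟩ := hball x hx
      obtain ⟨hz1, hz2⟩ := hZle x hx
      have hx0 : 0 < x := lt_of_le_of_lt (abs_nonneg t) h1
      have hzpos : 0 < Z x := lt_of_lt_of_le hzminpos hz1
      simp only [hF', norm_mul, Complex.norm_real]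
      have hsin : |Real.sin s| ≤ 1 := abs_le.mpr ⟨Real.neg_one_le_sin s, Real.sin_le_one s⟩
      have hw : ‖k * ((Z x : ℝ) : ℂ) * (Real.sin s : ℂ)‖ ≤ ‖k‖ * (y + ε) := by
        rw [norm_mul, norm_mul, Complex.norm_real, Complex.norm_real]
        rw [Real.norm_eq_abs, Real.norm_eq_abs, abs_of_pos hzpos]
        calc ‖k‖ * Z x * |Real.sin s| ≤ ‖k‖ * Z x * 1 :=
              mul_le_mul_of_nonneg_left hsin (by positivity)
          _ = ‖k‖ * Z x := by ring
          _ ≤ ‖k‖ * (y + ε) := by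
              apply mul_le_mul_of_nonneg_left _ (norm_nonneg k)
              linarith [hz2, h2]
      have hsinh : ‖Complex.sinh (k * ((Z x : ℝ) : ℂ) * (Real.sin s : ℂ))‖ ≤
          Real.exp (‖k‖ * (y + ε)) :=
        (norm_sinh_le _).trans (Real.exp_le_exp.2 hw)
      have hfrac : |x / Z x| ≤ (y + ε) / zmin := by
        rw [abs_of_pos (div_pos hx0 hzpos)]
        exact div_le_div₀ (by positivity) (by linarith) hzminpos hz1
      calc ‖Complex.sinh (k * ((Z x : ℝ) : ℂ) * (Real.sin s : ℂ))‖ *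
            (‖k‖ * ‖(Real.sin s : ℝ)‖ * ‖x / Z x‖) ≤
            Real.exp (‖k‖ * (y + ε)) * (‖k‖ * 1 * ((y + ε) / zmin)) := by
            apply mul_le_mul hsinh _ (by positivity) (Real.exp_pos _).le
            apply mul_le_mul _ hfrac (abs_nonneg _) (by positivity)
            exact mul_le_mul_of_nonneg_left (by simpa [Real.norm_eq_abs] using hsin)
              (norm_nonneg k)
        _ = bound s := by simp [hbd])
    (by apply intervalIntegrable_const)
    (Filter.Eventually.of_forall fun s _ x hx => by
      obtain ⟨h1, _, _⟩ := hball x hx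
      have hZd : HasDerivAt (fun x : ℝ => ((Z x : ℝ) : ℂ)) (((x / Z x : ℝ) : ℂ)) x :=
        (hasDerivAt_sqrt_sub t x h1).ofReal_comp
      have hu : HasDerivAt (fun x : ℝ => k * ((Z x : ℝ) : ℂ) * (Real.sin s : ℂ))
          (k * ((x / Z x : ℝ) : ℂ) * (Real.sin s : ℂ)) x := (hZd.const_mul k).mul_const _
      have h := (Complex.hasDerivAt_cosh (k * ((Z x : ℝ) : ℂ) * (Real.sin s : ℂ))).scomp x hu
      simp only [Function.comp_def, smul_eq_mul] at h
      simp only [hF, hF']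
      convert h using 1
      ring)
  -- now massage the conclusion
  have hzy : 0 < Z y := by
    have h1 : -y < t := by linarith [neg_abs_le t]
    have h2 : t < y := by linarith [le_abs_self t]
    exact Real.sqrt_pos.mpr (by nlinarith)
  have hD : Dker k y t = (1 / (2 * (Real.pi : ℂ))) *
      ∫ s in (-(Real.pi / 2))..(Real.pi / 2), F' y s := by
    have hzne : ((Z y : ℝ) : ℂ) ≠ 0 := Complex.ofReal_ne_zero.mpr hzy.ne'
    have hcongr : ∀ s : ℝ, F' y s =
        (k ^ 2 * (y : ℂ)) * (((Real.sin s : ℂ)) ^ 2 *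
          sinhc (k * ((Z y : ℝ) : ℂ) * (Real.sin s : ℂ))) := by
      intro s
      by_cases hc : k * (Real.sin s : ℂ) = 0
      · have hw0 : k * ((Z y : ℝ) : ℂ) * (Real.sin s : ℂ) = 0 := by
          rcases mul_eq_zero.mp hc with h | h <;> simp [h]
        simp only [hF', hw0, Complex.sinh_zero, zero_mul]
        have h0 : k ^ 2 * (y : ℂ) * ((Real.sin s : ℂ) ^ 2 * sinhc 0) = 0 := by
          rw [show k ^ 2 * (y : ℂ) * ((Real.sin s : ℂ) ^ 2 * sinhc 0) =
              (k * (Real.sin s : ℂ)) ^ 2 * ((y : ℂ) * sinhc 0) from by ring, hc]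
          ring
        exact h0.symm
      · have hk : k ≠ 0 := fun h => hc (by rw [h]; ring)
        have hs : ((Real.sin s : ℝ) : ℂ) ≠ 0 := fun h => hc (by rw [h]; ring)
        have hwne : k * ((Z y : ℝ) : ℂ) * (Real.sin s : ℂ) ≠ 0 :=
          mul_ne_zero (mul_ne_zero hk hzne) hs
        simp only [hF', sinhc, if_neg hwne]
        have hky : ((y / Z y : ℝ) : ℂ) = (y : ℂ) / ((Z y : ℝ) : ℂ) := by push_cast; ring
        rw [hky]
        have hs2 : Complex.sin (s : ℂ) ≠ 0 := by rw [← Complex.ofReal_sin]; exact hs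
        field_simp [hk, hs2, hzne]
    rw [show Dker k y t = (1 / (2 * (Real.pi : ℂ))) * ((k ^ 2 * (y : ℂ)) *
        ∫ s in (-(Real.pi / 2))..(Real.pi / 2),
          ((Real.sin s : ℂ)) ^ 2 * sinhc (k * ((Z y : ℝ) : ℂ) * (Real.sin s : ℂ))) from by
      simp only [Dker, hZ]; ring]
    congr 1
    rw [← intervalIntegral.integral_const_mul]
    exact intervalIntegral.integral_congr fun s _ => (hcongr s).symm
  rw [hD]
  exact key.2.const_mul (1 / (2 * (Real.pi : ℂ)))
end

section
/- Fix k ∈ ℂ. On the open region {(y,t) ∈ ℝ² : y > |t|}, the function (y,t) ↦ r(k,y,t) is twice continuously differentiable and satisfies the Klein–Gordon-type equation ∂²r/∂t² − ∂²r/∂y² + k²·r = 0. -/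
open MeasureTheory

namespace RkerProof

open Real Finset intervalIntegral Filter

/-- Master summability lemma. -/
lemma summable_master {c : ℝ} (hc : 0 ≤ c) :
    Summable (fun n : ℕ => ((n : ℝ) + 1) ^ 4 * c ^ n / ((n.factorial : ℝ)) ^ 2) := by
  apply summable_of_ratio_norm_eventually_le (r := 1/2) (by norm_num)
  filter_upwards [Filter.eventually_ge_atTop ⌈32 * c⌉₊] with n hn
  have hn' : 32 * c ≤ (n : ℝ) := le_trans (Nat.le_ceil _) (by exact_mod_cast hn)
  have hfac : (0:ℝ) < (n.factorial : ℝ) := by exact_mod_cast n.factorial_pos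
  have hcn : (0:ℝ) ≤ c ^ n := pow_nonneg hc n
  have h1 : ((n:ℝ)+2)^4 ≤ 16 * ((n:ℝ)+1)^4 := by nlinarith [sq_nonneg ((n:ℝ)+1), sq_nonneg (n:ℝ), Nat.cast_nonneg (α := ℝ) n]
  have h2 : 32 * c ≤ ((n:ℝ)+1)^2 := by nlinarith [Nat.cast_nonneg (α := ℝ) n]
  have key : ((n:ℝ)+2)^4 * c ≤ 1/2 * ((n:ℝ)+1)^4 * ((n:ℝ)+1)^2 := by
    nlinarith [mul_le_mul_of_nonneg_left h2 (by positivity : (0:ℝ) ≤ ((n:ℝ)+1)^4),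
      mul_le_mul_of_nonneg_right h1 hc]
  have hpos1 : (0:ℝ) ≤ ((n:ℝ)+1)^4 * c^n / ((n.factorial:ℝ))^2 :=
    div_nonneg (mul_nonneg (by positivity) hcn) (by positivity)
  have hpos2 : (0:ℝ) ≤ (((n+1:ℕ):ℝ)+1)^4 * c^(n+1) / (((n+1).factorial:ℝ))^2 := by
    have : (0:ℝ) ≤ c^(n+1) := pow_nonneg hc _
    positivity
  rw [Real.norm_of_nonneg hpos2, Real.norm_of_nonneg hpos1]
  have hfs : (((n+1).factorial : ℝ)) = ((n:ℝ)+1) * (n.factorial : ℝ) := by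
    rw [Nat.factorial_succ]; push_cast; ring
  push_cast
  rw [hfs]
  calc ((n:ℝ)+1+1)^4 * c^(n+1) / (((n:ℝ)+1) * (n.factorial:ℝ))^2
      = (((n:ℝ)+2)^4 * c / ((n:ℝ)+1)^2) * (c^n / ((n.factorial:ℝ))^2) := by
        rw [pow_succ]; field_simp; ring
    _ ≤ (1/2 * ((n:ℝ)+1)^4) * (c^n / ((n.factorial:ℝ))^2) := by
        apply mul_le_mul_of_nonneg_right _ (by positivity)
        rw [div_le_iff₀ (by positivity)]
        nlinarith [key]
    _ = 1/2 * (((n:ℝ)+1)^4 * c^n / ((n.factorial:ℝ))^2) := by ring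

/-- Coefficients of the power series. -/
noncomputable def acoef (k : ℂ) (n : ℕ) : ℂ :=
  k ^ (2*n) / ((4:ℂ) ^ n * ((n.factorial : ℕ) : ℂ) ^ 2)

lemma norm_acoef (k : ℂ) (n : ℕ) :
    ‖acoef k n‖ = (‖k‖^2/4)^n / ((n.factorial : ℝ))^2 := by
  rw [acoef, norm_div, norm_mul, norm_pow, norm_pow, norm_pow, pow_mul]
  norm_num [Complex.norm_natCast]
  rw [div_pow, div_div]

lemma acoef_rec (k : ℂ) (n : ℕ) :
    k^2 * acoef k n = 4 * ((n:ℂ)+1)^2 * acoef k (n+1) := by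
  have h1 : ((n.factorial : ℕ) : ℂ) ≠ 0 := Nat.cast_ne_zero.mpr n.factorial_ne_zero
  have h2 : ((4:ℂ))^n ≠ 0 := pow_ne_zero _ (by norm_num)
  have h3 : ((n:ℂ)+1) ≠ 0 := Nat.cast_add_one_ne_zero n
  rw [acoef, acoef, Nat.factorial_succ]
  push_cast
  rw [mul_add 2 n 1, pow_add, pow_add]
  field_simp
  ring

lemma summable_of_coef_le {b : ℕ → ℂ} {C0 c0 : ℝ} (hc0 : 0 ≤ c0) (hC0 : 0 ≤ C0)
    (hb : ∀ n, ‖b n‖ ≤ C0 * (((n:ℝ)+1)^2 * c0^n / ((n.factorial:ℝ))^2))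
    (R : ℝ) (hR : 0 ≤ R) :
    Summable (fun n : ℕ => ((n:ℝ)+1) * ‖b n‖ * R^n) := by
  refine Summable.of_nonneg_of_le (fun n => mul_nonneg (mul_nonneg (by positivity) (norm_nonneg _)) (pow_nonneg hR n)) (fun n => ?_)
    ((summable_master (mul_nonneg hc0 hR)).mul_left C0)
  have hcn : (0:ℝ) ≤ c0^n := pow_nonneg hc0 n
  have hRn : (0:ℝ) ≤ R^n := pow_nonneg hR n
  have hfac : (0:ℝ) < ((n.factorial:ℝ))^2 := by
    have := n.factorial_pos; positivity
  calc ((n:ℝ)+1) * ‖b n‖ * R^n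
      ≤ ((n:ℝ)+1) * (C0 * (((n:ℝ)+1)^2 * c0^n / ((n.factorial:ℝ))^2)) * R^n := by
        exact mul_le_mul_of_nonneg_right
          (mul_le_mul_of_nonneg_left (hb n) (by positivity)) hRn
    _ = C0 * (((n:ℝ)+1)^3 * (c0^n * R^n)) / ((n.factorial:ℝ))^2 := by ring
    _ ≤ C0 * (((n:ℝ)+1)^4 * (c0*R)^n) / ((n.factorial:ℝ))^2 := by
        rw [mul_pow]
        have h34 : ((n:ℝ)+1)^3 ≤ ((n:ℝ)+1)^4 :=
          pow_le_pow_right₀ (by linarith [Nat.cast_nonneg (α:=ℝ) n]) (by norm_num)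
        have := mul_le_mul_of_nonneg_right h34 (mul_nonneg hcn hRn)
        have := mul_le_mul_of_nonneg_left this hC0
        exact (div_le_div_iff_of_pos_right hfac).mpr this
    _ = C0 * (((n:ℝ)+1)^4 * (c0*R)^n / ((n.factorial:ℝ))^2) := by ring

lemma norm_natcast_add_one (n : ℕ) : ‖((n:ℂ)+1)‖ = (n:ℝ)+1 := by
  rw [show ((n:ℂ)+1) = ((n+1:ℕ):ℂ) by push_cast; ring, Complex.norm_natCast]
  push_cast; ring

lemma coef_bound_g (k : ℂ) (n : ℕ) :
    ‖acoef k n‖ ≤ 1 * (((n:ℝ)+1)^2 * (‖k‖^2/4)^n / ((n.factorial:ℝ))^2) := by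
  rw [norm_acoef, one_mul]
  have hfac : (0:ℝ) < ((n.factorial:ℝ))^2 := by have := n.factorial_pos; positivity
  apply (div_le_div_iff_of_pos_right hfac).mpr
  have hx : (0:ℝ) ≤ (‖k‖^2/4)^n := pow_nonneg (by positivity) n
  nlinarith [mul_nonneg (show (0:ℝ) ≤ (n:ℝ)^2+2*n by positivity) hx]

lemma coef_bound_g1 (k : ℂ) (n : ℕ) :
    ‖acoef k (n+1) * ((n:ℂ)+1)‖ ≤
      (‖k‖^2/4+1) * (((n:ℝ)+1)^2 * (‖k‖^2/4)^n / ((n.factorial:ℝ))^2) := by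
  set c0 := ‖k‖^2/4 with hc0def
  have hc0 : 0 ≤ c0 := by positivity
  have hcn : (0:ℝ) ≤ c0^n := pow_nonneg hc0 n
  have hf : (0:ℝ) < (n.factorial:ℝ) := by exact_mod_cast n.factorial_pos
  have hn1 : (0:ℝ) < (n:ℝ)+1 := by positivity
  rw [norm_mul, norm_acoef, norm_natcast_add_one]
  have hfs : (((n+1).factorial : ℝ)) = ((n:ℝ)+1) * (n.factorial : ℝ) := by
    rw [Nat.factorial_succ]; push_cast; ring
  rw [hfs]
  have e1 : c0^(n+1) / (((n:ℝ)+1) * (n.factorial:ℝ))^2 * ((n:ℝ)+1)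
      = c0*c0^n/(((n:ℝ)+1)*(n.factorial:ℝ)^2) := by
    rw [pow_succ]; field_simp
  rw [e1]
  calc c0*c0^n/(((n:ℝ)+1)*(n.factorial:ℝ)^2)
      ≤ c0*c0^n/((n.factorial:ℝ)^2) := by
        apply div_le_div_of_nonneg_left (mul_nonneg hc0 hcn) (by positivity)
        nlinarith [sq_nonneg (n.factorial:ℝ)]
    _ ≤ (c0+1) * (((n:ℝ)+1)^2 * c0^n / ((n.factorial:ℝ))^2) := by
        rw [show (c0+1) * (((n:ℝ)+1)^2 * c0^n / ((n.factorial:ℝ))^2)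
            = ((c0+1) * (((n:ℝ)+1)^2 * c0^n)) / ((n.factorial:ℝ))^2 by ring]
        apply (div_le_div_iff_of_pos_right (by positivity)).mpr
        have nn : (0:ℝ) ≤ (n:ℝ) := Nat.cast_nonneg n
        nlinarith [mul_nonneg (mul_nonneg hc0 (mul_nonneg nn nn)) hcn,
          mul_nonneg (mul_nonneg hc0 nn) hcn, mul_nonneg hc0 hcn,
          mul_nonneg (mul_nonneg nn nn) hcn, mul_nonneg nn hcn, hcn]

lemma norm_natcast_add_two (n : ℕ) : ‖((n:ℂ)+2)‖ = (n:ℝ)+2 := by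
  rw [show ((n:ℂ)+2) = ((n+2:ℕ):ℂ) by push_cast; ring, Complex.norm_natCast]
  push_cast; ring

lemma coef_bound_g2 (k : ℂ) (n : ℕ) :
    ‖(acoef k (n+2) * ((n:ℂ)+2)) * ((n:ℂ)+1)‖ ≤
      ((‖k‖^2/4+1)^2) * (((n:ℝ)+1)^2 * (‖k‖^2/4)^n / ((n.factorial:ℝ))^2) := by
  set c0 := ‖k‖^2/4 with hc0def
  have hc0 : 0 ≤ c0 := by positivity
  have hcn : (0:ℝ) ≤ c0^n := pow_nonneg hc0 n
  have hf : (0:ℝ) < (n.factorial:ℝ) := by exact_mod_cast n.factorial_pos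
  have nn : (0:ℝ) ≤ (n:ℝ) := Nat.cast_nonneg n
  rw [norm_mul, norm_mul, norm_acoef, norm_natcast_add_one, norm_natcast_add_two]
  have hfs : (((n+2).factorial : ℝ)) = ((n:ℝ)+2) * (((n:ℝ)+1) * (n.factorial : ℝ)) := by
    rw [show n+2 = (n+1)+1 by ring, Nat.factorial_succ, Nat.factorial_succ]; push_cast; ring
  rw [hfs]
  have e1 : c0^(n+2) / (((n:ℝ)+2) * (((n:ℝ)+1) * (n.factorial:ℝ)))^2 * ((n:ℝ)+2) * ((n:ℝ)+1)
      = c0^2*c0^n/((((n:ℝ)+2)*((n:ℝ)+1))*(n.factorial:ℝ)^2) := by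
    rw [show n+2 = n+1+1 by ring, pow_succ, pow_succ]; field_simp
  rw [e1]
  calc c0^2*c0^n/((((n:ℝ)+2)*((n:ℝ)+1))*(n.factorial:ℝ)^2)
      ≤ c0^2*c0^n/((n.factorial:ℝ)^2) := by
        apply div_le_div_of_nonneg_left (mul_nonneg (by positivity) hcn) (by positivity)
        nlinarith [mul_nonneg (mul_nonneg nn nn) (sq_nonneg (n.factorial:ℝ)),
          mul_nonneg nn (sq_nonneg (n.factorial:ℝ)), sq_nonneg (n.factorial:ℝ)]
    _ ≤ (c0+1)^2 * (((n:ℝ)+1)^2 * c0^n / ((n.factorial:ℝ))^2) := by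
        rw [show (c0+1)^2 * (((n:ℝ)+1)^2 * c0^n / ((n.factorial:ℝ))^2)
            = ((c0+1)^2 * (((n:ℝ)+1)^2 * c0^n)) / ((n.factorial:ℝ))^2 by ring]
        apply (div_le_div_iff_of_pos_right (by positivity)).mpr
        nlinarith [mul_nonneg (mul_nonneg hc0 (mul_nonneg nn nn)) hcn,
          mul_nonneg (mul_nonneg (mul_nonneg hc0 hc0) (mul_nonneg nn nn)) hcn,
          mul_nonneg (mul_nonneg (mul_nonneg hc0 hc0) nn) hcn,
          mul_nonneg (mul_nonneg hc0 nn) hcn, mul_nonneg hc0 hcn,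
          mul_nonneg (mul_nonneg hc0 hc0) hcn,
          mul_nonneg (mul_nonneg nn nn) hcn, mul_nonneg nn hcn, hcn]

lemma hasDerivAt_tsum_pow (b : ℕ → ℂ)
    (hb : ∀ R : ℝ, 0 ≤ R → Summable (fun n : ℕ => ((n:ℝ)+1) * ‖b n‖ * R^n)) (w : ℂ) :
    HasDerivAt (fun z => ∑' n, b n * z^n) (∑' n, (b (n+1) * ((n:ℂ)+1)) * w^n) w := by
  set R := ‖w‖ + 1 with hRdef
  have hR0 : 0 < R := by positivity
  have hR1 : 1 ≤ R := by simp [hRdef]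
  have hu := hb R (le_of_lt hR0)
  have hball : w ∈ Metric.ball (0:ℂ) R := by
    simp only [Metric.mem_ball, dist_zero_right]; simp [hRdef]
  have hder : ∀ (n : ℕ) (y : ℂ), y ∈ Metric.ball (0:ℂ) R →
      HasDerivAt (fun z => b n * z^n) (b n * ((n:ℂ) * y^(n-1))) y :=
    fun n y _ => (hasDerivAt_pow n y).const_mul (b n)
  have hbound : ∀ (n : ℕ) (y : ℂ), y ∈ Metric.ball (0:ℂ) R →
      ‖b n * ((n:ℂ) * y^(n-1))‖ ≤ ((n:ℝ)+1) * ‖b n‖ * R^n := by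
    intro n y hy
    have hyR : ‖y‖ ≤ R := by
      rw [Metric.mem_ball, dist_zero_right] at hy; exact le_of_lt hy
    rw [norm_mul, norm_mul, norm_pow, Complex.norm_natCast]
    have hyRn : ‖y‖^(n-1) ≤ R^n := by
      calc ‖y‖^(n-1) ≤ R^(n-1) := pow_le_pow_left₀ (norm_nonneg _) hyR _
        _ ≤ R^n := pow_le_pow_right₀ hR1 (Nat.sub_le n 1)
    calc ‖b n‖ * ((n:ℝ) * ‖y‖^(n-1))
        ≤ ‖b n‖ * (((n:ℝ)+1) * R^n) := by
          apply mul_le_mul_of_nonneg_left _ (norm_nonneg _)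
          apply mul_le_mul (by linarith) hyRn (by positivity) (by linarith [Nat.cast_nonneg (α:=ℝ) n])
      _ = ((n:ℝ)+1) * ‖b n‖ * R^n := by ring
  have hsum0 : Summable (fun n : ℕ => b n * (0:ℂ)^n) := by
    apply summable_of_ne_finset_zero (s := {0})
    intro n hn
    simp only [Finset.mem_singleton] at hn
    simp [zero_pow hn]
  have H := hasDerivAt_tsum_of_isPreconnected hu Metric.isOpen_ball
    (convex_ball (0:ℂ) R).isPreconnected hder hbound (Metric.mem_ball_self hR0) hsum0 hball
  have hsumd : Summable (fun n : ℕ => b n * ((n:ℂ) * w^(n-1))) :=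
    Summable.of_norm_bounded hu (fun n => hbound n w hball)
  convert H using 1
  · rfl
  · rfl
  rw [Summable.tsum_eq_zero_add hsumd]
  simp only [Nat.cast_zero, zero_mul, mul_zero, zero_add, Nat.add_sub_cancel]
  apply tsum_congr
  intro n
  push_cast
  ring

noncomputable def g (k : ℂ) (w : ℂ) : ℂ := ∑' n, acoef k n * w ^ n
noncomputable def g1 (k : ℂ) (w : ℂ) : ℂ := ∑' n, (acoef k (n+1) * ((n:ℂ)+1)) * w ^ n
noncomputable def g2 (k : ℂ) (w : ℂ) : ℂ :=
  ∑' n, ((acoef k (n+2) * ((n:ℂ)+2)) * ((n:ℂ)+1)) * w ^ n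

lemma hb_g (k : ℂ) : ∀ R : ℝ, 0 ≤ R →
    Summable (fun n : ℕ => ((n:ℝ)+1) * ‖acoef k n‖ * R^n) :=
  fun R hR => summable_of_coef_le (by positivity) (by norm_num) (coef_bound_g k) R hR

lemma hb_g1 (k : ℂ) : ∀ R : ℝ, 0 ≤ R →
    Summable (fun n : ℕ => ((n:ℝ)+1) * ‖acoef k (n+1) * ((n:ℂ)+1)‖ * R^n) :=
  fun R hR => summable_of_coef_le (by positivity) (by positivity) (coef_bound_g1 k) R hR

lemma hb_g2 (k : ℂ) : ∀ R : ℝ, 0 ≤ R →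
    Summable (fun n : ℕ => ((n:ℝ)+1) * ‖(acoef k (n+2) * ((n:ℂ)+2)) * ((n:ℂ)+1)‖ * R^n) :=
  fun R hR => summable_of_coef_le (by positivity) (by positivity) (coef_bound_g2 k) R hR

lemma summable_term_of {b : ℕ → ℂ}
    (hb : ∀ R : ℝ, 0 ≤ R → Summable (fun n : ℕ => ((n:ℝ)+1) * ‖b n‖ * R^n)) (w : ℂ) :
    Summable (fun n : ℕ => b n * w^n) := by
  apply Summable.of_norm_bounded (hb ‖w‖ (norm_nonneg w))
  intro n
  rw [norm_mul, norm_pow]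
  exact mul_le_mul_of_nonneg_right
    (le_mul_of_one_le_left (norm_nonneg _) (by linarith [Nat.cast_nonneg (α:=ℝ) n]))
    (pow_nonneg (norm_nonneg w) n)

lemma hasDerivAt_g (k : ℂ) (w : ℂ) : HasDerivAt (g k) (g1 k w) w := by
  have := hasDerivAt_tsum_pow (acoef k) (hb_g k) w
  exact this

lemma hasDerivAt_g1 (k : ℂ) (w : ℂ) : HasDerivAt (g1 k) (g2 k w) w := by
  have H := hasDerivAt_tsum_pow (fun n => acoef k (n+1) * ((n:ℂ)+1)) (hb_g1 k) w
  unfold g1 g2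
  convert H using 1
  apply tsum_congr; intro n; push_cast; ring

lemma ode (k : ℂ) (w : ℂ) : k^2 * g k w = 4 * w * g2 k w + 4 * g1 k w := by
  have Sg : Summable (fun n : ℕ => acoef k n * w^n) := summable_term_of (hb_g k) w
  have S1 : Summable (fun n : ℕ => (acoef k (n+1) * ((n:ℂ)+1)) * w^n) :=
    summable_term_of (hb_g1 k) w
  have S2 : Summable (fun n : ℕ => ((acoef k (n+2) * ((n:ℂ)+2)) * ((n:ℂ)+1)) * w^n) :=
    summable_term_of (hb_g2 k) w
  have eL : (fun n : ℕ => k^2 * (acoef k n * w^n))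
      = fun n : ℕ => (4*((n:ℂ)+1)^2*acoef k (n+1)) * w^n := by
    funext n; linear_combination w^n * acoef_rec k n
  have SL : Summable (fun n : ℕ => (4*((n:ℂ)+1)^2*acoef k (n+1)) * w^n) := by
    rw [← eL]; exact Sg.mul_left _
  have e1 : k^2 * g k w = ∑' n : ℕ, (4*((n:ℂ)+1)^2*acoef k (n+1)) * w^n := by
    rw [g, ← tsum_mul_left, ← eL]
  have e2 : (4:ℂ) * g1 k w = ∑' n : ℕ, 4*((acoef k (n+1) * ((n:ℂ)+1)) * w^n) := by
    rw [g1, ← tsum_mul_left]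
  set F : ℕ → ℂ := fun n => (4*((n:ℂ)+1)*(n:ℂ)*acoef k (n+1)) * w^n with hFdef
  have eF : (fun n : ℕ => (4*((n:ℂ)+1)^2*acoef k (n+1)) * w^n
      - 4*((acoef k (n+1) * ((n:ℂ)+1)) * w^n)) = F := by
    funext n; rw [hFdef]; ring
  have SF : Summable F := by rw [← eF]; exact SL.sub (S1.mul_left 4)
  have e3 : k^2 * g k w - 4 * g1 k w = ∑' n, F n := by
    rw [e1, e2, ← Summable.tsum_sub SL (S1.mul_left 4), ← eF]
  have e4 : ∑' n, F n = 4 * w * g2 k w := by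
    rw [Summable.tsum_eq_zero_add SF]
    have hF0 : F 0 = 0 := by simp [hFdef]
    rw [hF0, zero_add, g2, ← tsum_mul_left]
    apply tsum_congr; intro n
    rw [hFdef]
    push_cast
    ring
  linear_combination e3 + e4

lemma prod_formula (n : ℕ) :
    ∏ i ∈ Finset.range n, (2*(i:ℝ)+1)/(2*(i:ℝ)+2)
      = ((2*n).factorial : ℝ) / (4^n * ((n.factorial:ℝ))^2) := by
  induction n with
  | zero => simp
  | succ m ih =>
    rw [Finset.prod_range_succ, ih]
    rw [show 2*(m+1) = (2*m+1)+1 from by ring, Nat.factorial_succ ((2*m+1)),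
      Nat.factorial_succ (2*m), Nat.factorial_succ m]
    have h1 : ((2*m).factorial:ℝ) ≠ 0 := by positivity
    have h2 : ((m.factorial:ℝ)) ≠ 0 := by positivity
    have h3 : (2*(m:ℝ)+2) ≠ 0 := by positivity
    have h4 : ((4:ℝ))^m ≠ 0 := by positivity
    push_cast
    field_simp
    ring

lemma integral_sin_even_sym (n : ℕ) :
    (∫ s in (-(π/2))..(π/2), Real.sin s ^ (2*n))
      = π * ((2*n).factorial : ℝ) / (4^n * ((n.factorial:ℝ))^2) := by
  have hcont : ∀ a b : ℝ, IntervalIntegrable (fun s => Real.sin s ^ (2*n)) volume a b :=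
    fun a b => (Real.continuous_sin.pow _).intervalIntegrable a b
  have h1 : (∫ s in (-(π/2))..(0:ℝ), Real.sin s ^ (2*n))
      = ∫ s in (0:ℝ)..(π/2), Real.sin s ^ (2*n) := by
    have h := intervalIntegral.integral_comp_neg (a := (0:ℝ)) (b := π/2)
      (fun s => Real.sin s ^ (2*n))
    simp only [neg_zero] at h
    rw [← h]
    apply intervalIntegral.integral_congr
    intro x _
    simp only [Real.sin_neg]
    exact (even_two_mul n).neg_pow _
  have h2 : (∫ s in (π/2)..π, Real.sin s ^ (2*n))
      = ∫ s in (0:ℝ)..(π/2), Real.sin s ^ (2*n) := by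
    have h := intervalIntegral.integral_comp_sub_left (a := (0:ℝ)) (b := π/2)
      (fun s => Real.sin s ^ (2*n)) π
    rw [show π - π/2 = π/2 from by ring, sub_zero] at h
    rw [← h]
    apply intervalIntegral.integral_congr
    intro x _
    simp [Real.sin_pi_sub]
  have splitL := intervalIntegral.integral_add_adjacent_intervals
    (a := -(π/2)) (b := (0:ℝ)) (c := π/2) (hcont _ _) (hcont _ _)
  have splitR := intervalIntegral.integral_add_adjacent_intervals
    (a := (0:ℝ)) (b := π/2) (c := π) (hcont _ _) (hcont _ _)
  have key : (∫ s in (-(π/2))..(π/2), Real.sin s ^ (2*n))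
      = ∫ x in (0:ℝ)..π, Real.sin x ^ (2*n) := by
    rw [← splitL, ← splitR, h1, h2]
  rw [key, integral_sin_pow_even, prod_formula, mul_div_assoc]

lemma integral_cosh (k : ℂ) (z : ℝ) :
    (∫ s in (-(π/2))..(π/2), Complex.cosh (k * (z:ℂ) * ((Real.sin s : ℝ):ℂ)))
      = (π:ℂ) * g k ((z:ℂ)^2) := by
  have hπ := Real.pi_pos
  have hle : -(π/2) ≤ π/2 := by linarith
  set F : ℕ → ℝ → ℂ :=
    fun n s => (k * (z:ℂ) * ((Real.sin s : ℝ):ℂ))^(2*n) / (((2*n).factorial:ℕ):ℂ) with hFdef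
  have hconts : ∀ n, Continuous (F n) := by
    intro n
    exact ((continuous_const.mul
      (Complex.continuous_ofReal.comp Real.continuous_sin)).pow _).div_const _
  have hInt : ∀ n, Integrable (F n) (volume.restrict (Set.Ioc (-(π/2)) (π/2))) :=
    fun n => (hconts n).integrableOn_Ioc
  set B : ℕ → ℝ := fun n => ‖k * (z:ℂ)‖^(2*n) / (((2*n).factorial:ℕ):ℝ) with hBdef
  have hFB : ∀ n s, ‖F n s‖ ≤ B n := by
    intro n s
    rw [hFdef, hBdef]
    simp only [norm_div, norm_pow, Complex.norm_natCast]
    apply (div_le_div_iff_of_pos_right (show (0:ℝ) < (((2*n).factorial:ℕ):ℝ) by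
      exact_mod_cast (2*n).factorial_pos)).mpr
    apply pow_le_pow_left₀ (norm_nonneg _)
    rw [norm_mul]
    calc ‖k * (z:ℂ)‖ * ‖((Real.sin s : ℝ):ℂ)‖ ≤ ‖k * (z:ℂ)‖ * 1 := by
          apply mul_le_mul_of_nonneg_left _ (norm_nonneg _)
          rw [Complex.norm_real]
          exact abs_le.mpr ⟨Real.neg_one_le_sin s, Real.sin_le_one s⟩
      _ = ‖k * (z:ℂ)‖ := mul_one _
  have measπ : (volume (Set.Ioc (-(π/2)) (π/2))).toReal = π := by
    rw [Real.volume_Ioc, ENNReal.toReal_ofReal (by linarith)]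
    ring
  have hnormInt : ∀ n, (∫ s in Set.Ioc (-(π/2)) (π/2), ‖F n s‖) ≤ π * B n := by
    intro n
    calc (∫ s in Set.Ioc (-(π/2)) (π/2), ‖F n s‖)
        ≤ ∫ _s in Set.Ioc (-(π/2)) (π/2), B n := by
          apply setIntegral_mono_on (hInt n).norm ((integrableOn_const_iff (by simp)).mpr (Or.inr ?_))
            measurableSet_Ioc (fun s _ => hFB n s)
          rw [Real.volume_Ioc]
          exact ENNReal.ofReal_lt_top
      _ = π * B n := by rw [setIntegral_const, measureReal_def, measπ, smul_eq_mul]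
  have hsumB : Summable B := by
    refine Summable.of_nonneg_of_le (fun n => by positivity) (fun n => ?_)
      (Real.summable_pow_div_factorial (‖k*(z:ℂ)‖^2))
    rw [hBdef]
    simp only
    rw [pow_mul]
    apply div_le_div_of_nonneg_left (pow_nonneg (by positivity) n)
      (by exact_mod_cast n.factorial_pos)
    exact_mod_cast Nat.factorial_le (by omega)
  have hsumI : Summable (fun n => ∫ s in Set.Ioc (-(π/2)) (π/2), ‖F n s‖) :=
    Summable.of_nonneg_of_le (fun n => integral_nonneg (fun s => norm_nonneg _))
      hnormInt (hsumB.mul_left π)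
  rw [intervalIntegral.integral_of_le hle]
  have hcosh : ∀ s : ℝ, Complex.cosh (k * (z:ℂ) * ((Real.sin s : ℝ):ℂ)) = ∑' n, F n s :=
    fun s => Complex.cosh_eq_tsum _
  have hterm : ∀ n, (∫ s in Set.Ioc (-(π/2)) (π/2), F n s)
      = ((k*(z:ℂ))^(2*n)/(((2*n).factorial:ℕ):ℂ))
        * (((π * ((2*n).factorial:ℝ) / (4^n * ((n.factorial:ℝ))^2)) : ℝ) : ℂ) := by
    intro n
    have e : ∀ s : ℝ, F n s
        = ((k*(z:ℂ))^(2*n)/(((2*n).factorial:ℕ):ℂ)) * (((Real.sin s ^ (2*n) : ℝ)):ℂ) := by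
      intro s
      rw [hFdef]
      push_cast
      rw [mul_pow]
      ring
    simp_rw [e]
    rw [MeasureTheory.integral_const_mul]
    congr 1
    have hreal : (∫ a in Set.Ioc (-(π/2)) (π/2), Real.sin a ^ (2*n))
        = π * (((2*n).factorial:ℝ)) / (4^n * ((n.factorial:ℝ))^2) := by
      rw [← intervalIntegral.integral_of_le hle, integral_sin_even_sym n]
    rw [← hreal]
    exact integral_ofReal
  calc (∫ s in Set.Ioc (-(π/2)) (π/2), Complex.cosh (k * (z:ℂ) * ((Real.sin s : ℝ):ℂ)))
      = ∫ s in Set.Ioc (-(π/2)) (π/2), ∑' n, F n s := by simp_rw [hcosh]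
    _ = ∑' n, ∫ s in Set.Ioc (-(π/2)) (π/2), F n s :=
        (integral_tsum_of_summable_integral_norm hInt hsumI).symm
    _ = (π:ℂ) * g k ((z:ℂ)^2) := by
        rw [g, ← tsum_mul_left]
        apply tsum_congr
        intro n
        rw [hterm n, acoef]
        have h1 : (((2*n).factorial:ℕ):ℂ) ≠ 0 := Nat.cast_ne_zero.mpr (2*n).factorial_ne_zero
        have h2 : ((4:ℂ))^n ≠ 0 := pow_ne_zero _ (by norm_num)
        have h3 : ((n.factorial:ℕ):ℂ) ≠ 0 := Nat.cast_ne_zero.mpr n.factorial_ne_zero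
        push_cast
        field_simp
        ring

lemma rker_eq (k : ℂ) {y t : ℝ} (h : |t| < y) :
    rker k y t = (1/2 : ℂ) * g k ((y:ℂ)^2 - (t:ℂ)^2) := by
  have habs : |t|^2 < y^2 := pow_lt_pow_left₀ h (abs_nonneg t) (by norm_num)
  have ht2 : t^2 ≤ y^2 := by rw [← sq_abs]; exact le_of_lt habs
  rw [rker, integral_cosh k (Real.sqrt (y^2 - t^2))]
  have hsq : ((Real.sqrt (y^2 - t^2) : ℝ):ℂ)^2 = (y:ℂ)^2 - (t:ℂ)^2 := by
    rw [← Complex.ofReal_pow, Real.sq_sqrt (by linarith)]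
    push_cast; ring
  rw [hsq]
  have hπ : (π:ℂ) ≠ 0 := Complex.ofReal_ne_zero.mpr Real.pi_ne_zero
  field_simp

lemma contDiff_main (k : ℂ) :
    ContDiff ℝ 2 (fun p : ℝ × ℝ => (1/2 : ℂ) * g k ((p.1:ℂ)^2 - (p.2:ℂ)^2)) := by
  have hg : Differentiable ℂ (g k) := fun w => (hasDerivAt_g k w).differentiableAt
  have hg2 : ContDiff ℝ 2 (g k) := (hg.contDiff (n := 2)).restrict_scalars ℝ
  have hin : ContDiff ℝ 2 (fun p : ℝ × ℝ => (p.1:ℂ)^2 - (p.2:ℂ)^2) := by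
    apply ContDiff.sub
    · exact (Complex.ofRealCLM.contDiff.comp contDiff_fst).pow 2
    · exact (Complex.ofRealCLM.contDiff.comp contDiff_snd).pow 2
  exact contDiff_const.mul (hg2.comp hin)

lemma hasDerivAt_inner_t (k : ℂ) (y t : ℝ) :
    HasDerivAt (fun t' : ℝ => (1/2:ℂ) * g k ((y:ℂ)^2 - ((t':ℝ):ℂ)^2))
      (-(t:ℂ) * g1 k ((y:ℂ)^2 - (t:ℂ)^2)) t := by
  have hz : ∀ z : ℂ, HasDerivAt (fun z : ℂ => (1/2:ℂ) * g k ((y:ℂ)^2 - z^2))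
      ((1/2:ℂ) * (g1 k ((y:ℂ)^2 - z^2) * (-(2*z)))) z := by
    intro z
    have hinner : HasDerivAt (fun z : ℂ => (y:ℂ)^2 - z^2) (-(2*z)) z := by
      simpa using (hasDerivAt_pow 2 z).const_sub ((y:ℂ)^2)
    exact ((hasDerivAt_g k _).comp z hinner).const_mul _
  have h := (hz ((t:ℝ):ℂ)).comp_ofReal
  convert h using 1
  ring

lemma hasDerivAt_inner_y (k : ℂ) (y t : ℝ) :
    HasDerivAt (fun y' : ℝ => (1/2:ℂ) * g k (((y':ℝ):ℂ)^2 - (t:ℂ)^2))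
      ((y:ℂ) * g1 k ((y:ℂ)^2 - (t:ℂ)^2)) y := by
  have hz : ∀ z : ℂ, HasDerivAt (fun z : ℂ => (1/2:ℂ) * g k (z^2 - (t:ℂ)^2))
      ((1/2:ℂ) * (g1 k (z^2 - (t:ℂ)^2) * (2*z))) z := by
    intro z
    have hinner : HasDerivAt (fun z : ℂ => z^2 - (t:ℂ)^2) (2*z) z := by
      simpa using (hasDerivAt_pow 2 z).sub_const ((t:ℂ)^2)
    exact ((hasDerivAt_g k _).comp z hinner).const_mul _
  have h := (hz ((y:ℝ):ℂ)).comp_ofReal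
  convert h using 1
  ring

lemma hasDerivAt_second_t (k : ℂ) (y t : ℝ) :
    HasDerivAt (fun t' : ℝ => -((t':ℝ):ℂ) * g1 k ((y:ℂ)^2 - ((t':ℝ):ℂ)^2))
      (-g1 k ((y:ℂ)^2 - (t:ℂ)^2) + 2*(t:ℂ)^2 * g2 k ((y:ℂ)^2 - (t:ℂ)^2)) t := by
  have hz : ∀ z : ℂ, HasDerivAt (fun z : ℂ => -z * g1 k ((y:ℂ)^2 - z^2))
      ((-1) * g1 k ((y:ℂ)^2 - z^2) + (-z) * (g2 k ((y:ℂ)^2 - z^2) * (-(2*z)))) z := by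
    intro z
    have hinner : HasDerivAt (fun z : ℂ => (y:ℂ)^2 - z^2) (-(2*z)) z := by
      simpa using (hasDerivAt_pow 2 z).const_sub ((y:ℂ)^2)
    exact ((hasDerivAt_id z).neg).mul ((hasDerivAt_g1 k _).comp z hinner)
  have h := (hz ((t:ℝ):ℂ)).comp_ofReal
  convert h using 1
  ring

lemma hasDerivAt_second_y (k : ℂ) (y t : ℝ) :
    HasDerivAt (fun y' : ℝ => ((y':ℝ):ℂ) * g1 k (((y':ℝ):ℂ)^2 - (t:ℂ)^2))
      (g1 k ((y:ℂ)^2 - (t:ℂ)^2) + 2*(y:ℂ)^2 * g2 k ((y:ℂ)^2 - (t:ℂ)^2)) y := by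
  have hz : ∀ z : ℂ, HasDerivAt (fun z : ℂ => z * g1 k (z^2 - (t:ℂ)^2))
      ((1:ℂ) * g1 k (z^2 - (t:ℂ)^2) + z * (g2 k (z^2 - (t:ℂ)^2) * (2*z))) z := by
    intro z
    have hinner : HasDerivAt (fun z : ℂ => z^2 - (t:ℂ)^2) (2*z) z := by
      simpa using (hasDerivAt_pow 2 z).sub_const ((t:ℂ)^2)
    exact (hasDerivAt_id z).mul ((hasDerivAt_g1 k _).comp z hinner)
  have h := (hz ((y:ℝ):ℂ)).comp_ofReal
  convert h using 1
  ring

theorem main (k : ℂ) :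
    ContDiffOn ℝ 2 (fun p : ℝ × ℝ => rker k p.1 p.2) {p : ℝ × ℝ | |p.2| < p.1} ∧
    ∀ y t : ℝ, |t| < y →
      deriv (fun t' => deriv (fun t'' => rker k y t'') t') t -
        deriv (fun y' => deriv (fun y'' => rker k y'' t) y') y +
        k ^ 2 * rker k y t = 0 := by
  constructor
  · exact ((contDiff_main k).contDiffOn).congr (fun p hp => rker_eq k hp)
  · intro y t hyt
    have hSopen : IsOpen {x : ℝ | |x| < y} := isOpen_lt continuous_abs continuous_const
    have h1 : ∀ t' ∈ {x : ℝ | |x| < y}, deriv (fun t'' => rker k y t'') t'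
        = -((t':ℝ):ℂ) * g1 k ((y:ℂ)^2 - ((t':ℝ):ℂ)^2) := by
      intro t' ht'
      have hev : (fun t'' => rker k y t'')
          =ᶠ[nhds t'] (fun t'' => (1/2:ℂ) * g k ((y:ℂ)^2 - ((t'':ℝ):ℂ)^2)) := by
        filter_upwards [hSopen.mem_nhds ht'] with s hs
        exact rker_eq k hs
      rw [hev.deriv_eq, (hasDerivAt_inner_t k y t').deriv]
    have h2 : deriv (fun t' => deriv (fun t'' => rker k y t'') t') t
        = -g1 k ((y:ℂ)^2 - (t:ℂ)^2) + 2*(t:ℂ)^2 * g2 k ((y:ℂ)^2 - (t:ℂ)^2) := by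
      have hev2 : (fun t' => deriv (fun t'' => rker k y t'') t')
          =ᶠ[nhds t] (fun t' => -((t':ℝ):ℂ) * g1 k ((y:ℂ)^2 - ((t':ℝ):ℂ)^2)) := by
        filter_upwards [hSopen.mem_nhds hyt] with s hs
        exact h1 s hs
      rw [hev2.deriv_eq, (hasDerivAt_second_t k y t).deriv]
    have hTopen : IsOpen {x : ℝ | |t| < x} := isOpen_lt continuous_const continuous_id
    have h3 : ∀ y' ∈ {x : ℝ | |t| < x}, deriv (fun y'' => rker k y'' t) y'
        = ((y':ℝ):ℂ) * g1 k (((y':ℝ):ℂ)^2 - (t:ℂ)^2) := by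
      intro y' hy'
      have hev : (fun y'' => rker k y'' t)
          =ᶠ[nhds y'] (fun y'' => (1/2:ℂ) * g k (((y'':ℝ):ℂ)^2 - (t:ℂ)^2)) := by
        filter_upwards [hTopen.mem_nhds hy'] with s hs
        exact rker_eq k hs
      rw [hev.deriv_eq, (hasDerivAt_inner_y k y' t).deriv]
    have h4 : deriv (fun y' => deriv (fun y'' => rker k y'' t) y') y
        = g1 k ((y:ℂ)^2 - (t:ℂ)^2) + 2*(y:ℂ)^2 * g2 k ((y:ℂ)^2 - (t:ℂ)^2) := by
      have hev2 : (fun y' => deriv (fun y'' => rker k y'' t) y')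
          =ᶠ[nhds y] (fun y' => ((y':ℝ):ℂ) * g1 k (((y':ℝ):ℂ)^2 - (t:ℂ)^2)) := by
        filter_upwards [hTopen.mem_nhds hyt] with s hs
        exact h3 s hs
      rw [hev2.deriv_eq, (hasDerivAt_second_y k y t).deriv]
    rw [h2, h4, rker_eq k hyt]
    linear_combination (1/2 : ℂ) * ode k ((y:ℂ)^2 - (t:ℂ)^2)

end RkerProof

/-- For fixed `k ∈ ℂ`, on the open region `{(y,t) : y > |t|}` the
function `(y,t) ↦ r(k,y,t)` is `C²` and satisfies `∂²r/∂t² − ∂²r/∂y² + k² r = 0`. -/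
theorem rker_contDiff_and_kleinGordon (k : ℂ) :
    ContDiffOn ℝ 2 (fun p : ℝ × ℝ => rker k p.1 p.2) {p : ℝ × ℝ | |p.2| < p.1} ∧
    ∀ y t : ℝ, |t| < y →
      deriv (fun t' => deriv (fun t'' => rker k y t'') t') t -
        deriv (fun y' => deriv (fun y'' => rker k y'' t) y') y +
        k ^ 2 * rker k y t = 0 :=
  RkerProof.main k
end
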